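/- With the coupled construction restricted to a single constancy block of length M (indices 1 to M) and target value i ∈ {-1,1}: P(γ_1 = i, A_k = i for all 1 ≤ k ≤ M, γ_{M+1} = i) = 1/(2·3^M), P(γ_1 = i, A_k = i for all k, γ_{M+1} = -i) = M/(2·3^M), and P(γ_1 = -i, A_k = i for all k, γ_{M+1} = i) = 0, hence P(γ_1 = -i, A_k = i for all k) = P(γ_1 = -i, A_k = i for all k, γ_{M+1} = -i) = 1/(2·3^M). -/

import Mathlib

open MeasureTheory ProbabilityTheory Finset

noncomputable section

/-- The sample space of the coupled construction: `ε`, `(α_k)`, `(β_k)`. -/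
abbrev Omega (K : ℕ) := Bool × (Fin K → Fin 3) × (Fin K → Bool)

/-- The uniform probability measure on `Omega K`; its coordinates are independent,
`ε` is uniform on `{-1,1}` (via `Bool`), each `α_k` is Bernoulli(1/3)
(`α_k = 1` iff the `Fin 3` coordinate equals `0`), each `β_k` uniform on `{-1,1}`. -/
def unif (K : ℕ) : Measure (Omega K) := (PMF.uniformOfFintype (Omega K)).toMeasure

def sgn (b : Bool) : ℤ := if b then 1 else -1

def epsRV {K : ℕ} (ω : Omega K) : ℤ := sgn ω.1

def alphaRV {K : ℕ} (k : Fin K) (ω : Omega K) : ℤ := if ω.2.1 k = 0 then 1 else 0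

def alphaN {K : ℕ} (k : Fin K) (ω : Omega K) : ℕ := if ω.2.1 k = 0 then 1 else 0

def betaRV {K : ℕ} (k : Fin K) (ω : Omega K) : ℤ := sgn (ω.2.2 k)

/-- `γ_{j+1} = ε · (-1)^{α_1 + ⋯ + α_j}` (0-indexed: `gammaRV j` is the paper's `γ_{j+1}`). -/
def gammaRV {K : ℕ} (j : ℕ) (ω : Omega K) : ℤ :=
  epsRV ω * (-1) ^ (∑ k ∈ Finset.univ.filter (fun k : Fin K => (k : ℕ) < j), alphaN k ω)

/-- `A_k = (1-α_k)β_k + α_k γ_k`. -/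
def ARV {K : ℕ} (k : Fin K) (ω : Omega K) : ℤ :=
  (1 - alphaRV k ω) * betaRV k ω + alphaRV k ω * gammaRV (k : ℕ) ω

/-- `B_k = (1-α_k)β_k - α_k γ_k`. -/
def BRV {K : ℕ} (k : Fin K) (ω : Omega K) : ℤ :=
  (1 - alphaRV k ω) * betaRV k ω - alphaRV k ω * gammaRV (k : ℕ) ω

namespace S12
variable {M : ℕ}

lemma unif_eq (K : ℕ) (P : Omega K → Prop) [DecidablePred P] :
    unif K {ω | P ω} = (univ.filter P).card / (Fintype.card (Omega K)) := by
  rw [unif, PMF.toMeasure_uniformOfFintype_apply _ ((Set.toFinite _).measurableSet)]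
  congr 1
  rw [← Set.toFinset_card]
  norm_cast
  congr 1
  ext ω
  simp [Set.mem_toFinset, Set.mem_setOf_eq]

lemma card_Omega (K : ℕ) : (Fintype.card (Omega K) : ENNReal) = 2 * 3 ^ K * 2 ^ K := by
  simp [Fintype.card_prod, Fintype.card_fun]
  push_cast
  ring

/-- flips strictly before position `j` -/
def F (j : ℕ) (ω : Omega M) : Finset (Fin M) :=
  univ.filter (fun k => (k : ℕ) < j ∧ ω.2.1 k = 0)

lemma gamma_eq (j : ℕ) (ω : Omega M) :
    gammaRV j ω = sgn ω.1 * (-1) ^ (F j ω).card := by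
  unfold gammaRV epsRV alphaN F
  congr 2
  rw [Finset.sum_boole, Finset.filter_filter]
  norm_cast

lemma ARV_eq (k : Fin M) (ω : Omega M) :
    ARV k ω = if ω.2.1 k = 0 then gammaRV k ω else betaRV k ω := by
  unfold ARV alphaRV
  by_cases h : ω.2.1 k = 0 <;> simp [h]

variable {i : ℤ}

lemma sgn_c (hi : i = 1 ∨ i = -1) : sgn (decide (i = 1)) = i := by
  rcases hi with h | h <;> subst h <;> simp [sgn]

lemma sgn_nc (hi : i = 1 ∨ i = -1) : sgn (!decide (i = 1)) = -i := by
  rcases hi with h | h <;> subst h <;> simp [sgn]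

lemma sgn_eq_iff (hi : i = 1 ∨ i = -1) (b : Bool) : sgn b = i ↔ b = decide (i = 1) := by
  rcases hi with h | h <;> subst h <;> cases b <;> simp [sgn]

lemma i_ne (hi : i = 1 ∨ i = -1) : i ≠ -i := by rcases hi with h | h <;> subst h <;> decide

lemma i_ne0 (hi : i = 1 ∨ i = -1) : i ≠ 0 := by rcases hi with h | h <;> subst h <;> decide

/-- If all `ARV k = i`, the set of flips has a parity/minimality structure. -/
lemma flips_min (hi : i = 1 ∨ i = -1) (ω : Omega M)
    (hA : ∀ k, ARV k ω = i) (k0 : Fin M) (h0 : ω.2.1 k0 = 0)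
    (hmin : ∀ k, ω.2.1 k = 0 → k0 ≤ k) : sgn ω.1 = i := by
  have hg := hA k0
  rw [ARV_eq, if_pos h0, gamma_eq] at hg
  have hF : F (k0 : ℕ) ω = ∅ := by
    ext j
    simp only [F, mem_filter, mem_univ, true_and, Finset.notMem_empty, iff_false, not_and]
    intro hj hj0
    exact absurd hj (not_lt.2 (hmin j hj0))
  rw [hF] at hg
  simpa using hg

lemma no_second_flip (hi : i = 1 ∨ i = -1) (ω : Omega M)
    (hA : ∀ k, ARV k ω = i) : (univ.filter (fun k => ω.2.1 k = 0)).card ≤ 1 := by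
  by_contra h
  push_neg at h
  set s := univ.filter (fun k : Fin M => ω.2.1 k = 0) with hs
  have hne : s.Nonempty := Finset.card_pos.1 (by omega)
  set k0 := s.min' hne with hk0
  have hk0s : k0 ∈ s := s.min'_mem hne
  have hne2 : (s.erase k0).Nonempty := by
    rw [← Finset.card_pos, Finset.card_erase_of_mem hk0s]; omega
  set k1 := (s.erase k0).min' hne2 with hk1
  have hk1e : k1 ∈ s.erase k0 := (s.erase k0).min'_mem hne2
  have hk1s : k1 ∈ s := Finset.mem_of_mem_erase hk1e
  have hk1ne : k1 ≠ k0 := Finset.ne_of_mem_erase hk1e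
  have hk01 : k0 < k1 := lt_of_le_of_ne (s.min'_le _ hk1s) (Ne.symm hk1ne)
  have hF : F (k1 : ℕ) ω = {k0} := by
    ext j
    simp only [F, mem_filter, mem_univ, true_and, Finset.mem_singleton]
    constructor
    · rintro ⟨hjlt, hj0⟩
      by_contra hjne
      have : j ∈ s.erase k0 := Finset.mem_erase.2 ⟨hjne, by simp [hs, hj0]⟩
      exact absurd hjlt (not_lt.2 ((s.erase k0).min'_le _ this))
    · rintro rfl
      exact ⟨hk01, by simpa [hs] using hk0s⟩
  have hg := hA k1
  rw [ARV_eq, if_pos (by simpa [hs] using hk1s), gamma_eq, hF] at hg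
  have heps : sgn ω.1 = i :=
    flips_min hi ω hA k0 (by simpa [hs] using hk0s)
      (fun k hk => s.min'_le _ (by simp [hs, hk]))
  rw [heps] at hg
  simp only [Finset.card_singleton, pow_one, mul_neg_one] at hg
  exact i_ne hi hg.symm

lemma F_of_no_flip (ω : Omega M) (h : ∀ k, ω.2.1 k ≠ 0) (j : ℕ) : F j ω = ∅ := by
  ext k; simp [F, h k]

lemma gamma0 (ω : Omega M) : gammaRV 0 ω = sgn ω.1 := by
  rw [gamma_eq]
  have : F (M := M) 0 ω = ∅ := by ext k; simp [F]
  simp [this]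

lemma FM_eq (ω : Omega M) : F M ω = univ.filter (fun k => ω.2.1 k = 0) := by
  ext k; simp [F, k.isLt]

/-- Characterization, case ε = -i. -/
lemma charNeg (hi : i = 1 ∨ i = -1) (ω : Omega M) (hε : ω.1 = !decide (i = 1)) :
    (∀ k, ARV k ω = i) ↔ (∀ k, ω.2.1 k ≠ 0 ∧ ω.2.2 k = decide (i = 1)) := by
  have hsgn : sgn ω.1 = -i := by rw [hε]; exact sgn_nc hi
  constructor
  · intro hA
    have hnoflip : ∀ k, ω.2.1 k ≠ 0 := by
      intro k hk
      have hne' : (univ.filter (fun k : Fin M => ω.2.1 k = 0)).Nonempty := ⟨k, by simp [hk]⟩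
      have hmem := Finset.min'_mem _ hne'
      have := flips_min hi ω hA ((univ.filter (fun k : Fin M => ω.2.1 k = 0)).min' hne')
        (by simpa using hmem) (fun k'' hk'' => Finset.min'_le _ _ (by simp [hk'']))
      rw [hsgn] at this
      exact i_ne hi this.symm
    intro k
    refine ⟨hnoflip k, ?_⟩
    have := hA k
    rw [ARV_eq, if_neg (hnoflip k)] at this
    exact (sgn_eq_iff hi _).1 this
  · intro h k
    rw [ARV_eq, if_neg (h k).1]
    unfold betaRV
    rw [(h k).2]
    exact sgn_c hi

lemma gammaM_of_no_flip (ω : Omega M) (h : ∀ k, ω.2.1 k ≠ 0) :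
    gammaRV M ω = sgn ω.1 := by
  rw [gamma_eq, F_of_no_flip ω h]; simp

/-- Characterization, case ε = i, no flip. -/
lemma charPos0 (hi : i = 1 ∨ i = -1) (ω : Omega M) (hε : ω.1 = decide (i = 1)) :
    ((∀ k, ARV k ω = i) ∧ gammaRV M ω = i) ↔
      (∀ k, ω.2.1 k ≠ 0 ∧ ω.2.2 k = decide (i = 1)) := by
  have hsgn : sgn ω.1 = i := by rw [hε]; exact sgn_c hi
  constructor
  · rintro ⟨hA, hM⟩
    have hcard := no_second_flip hi ω hA
    rw [gamma_eq, hsgn, FM_eq] at hM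
    have hpow : ((-1 : ℤ)) ^ (univ.filter (fun k : Fin M => ω.2.1 k = 0)).card = 1 :=
      mul_left_cancel₀ (i_ne0 hi) (by rw [hM, mul_one])
    have heven := (neg_one_pow_eq_one_iff_even (by decide : (-1 : ℤ) ≠ 1)).1 hpow
    rw [Nat.even_iff] at heven
    have h0 : (univ.filter (fun k : Fin M => ω.2.1 k = 0)).card = 0 := by omega
    have hnf : ∀ k, ω.2.1 k ≠ 0 := by
      intro k hk
      have : k ∈ univ.filter (fun k : Fin M => ω.2.1 k = 0) := by simp [hk]
      rw [Finset.card_eq_zero.1 h0] at this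
      exact absurd this (Finset.notMem_empty k)
    intro k
    refine ⟨hnf k, ?_⟩
    have := hA k
    rw [ARV_eq, if_neg (hnf k)] at this
    exact (sgn_eq_iff hi _).1 this
  · intro h
    have hnf : ∀ k, ω.2.1 k ≠ 0 := fun k => (h k).1
    constructor
    · intro k
      rw [ARV_eq, if_neg (hnf k)]
      unfold betaRV
      rw [(h k).2]
      exact sgn_c hi
    · rw [gammaM_of_no_flip ω hnf, hsgn]

/-- Characterization, case ε = i, one flip. -/
lemma charPos1 (hi : i = 1 ∨ i = -1) (ω : Omega M) (hε : ω.1 = decide (i = 1)) :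
    ((∀ k, ARV k ω = i) ∧ gammaRV M ω = -i) ↔
      (∃ k0, ω.2.1 k0 = 0 ∧ ∀ k, k ≠ k0 → (ω.2.1 k ≠ 0 ∧ ω.2.2 k = decide (i = 1))) := by
  have hsgn : sgn ω.1 = i := by rw [hε]; exact sgn_c hi
  constructor
  · rintro ⟨hA, hM⟩
    have hcard := no_second_flip hi ω hA
    rw [gamma_eq, hsgn, FM_eq] at hM
    have hpow : ((-1 : ℤ)) ^ (univ.filter (fun k : Fin M => ω.2.1 k = 0)).card = -1 := by
      have h2 : i * ((-1:ℤ) ^ (univ.filter (fun k : Fin M => ω.2.1 k = 0)).card) = i * (-1) := by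
        rw [hM]; ring
      exact mul_left_cancel₀ (i_ne0 hi) h2
    have hodd : ¬ Even ((univ.filter (fun k : Fin M => ω.2.1 k = 0)).card) := by
      intro he
      rw [he.neg_one_pow] at hpow
      norm_num at hpow
    rw [Nat.even_iff] at hodd
    have h1 : (univ.filter (fun k : Fin M => ω.2.1 k = 0)).card = 1 := by omega
    obtain ⟨k0, hk0⟩ := Finset.card_eq_one.1 h1
    have hk0mem : ω.2.1 k0 = 0 := by
      have : k0 ∈ univ.filter (fun k : Fin M => ω.2.1 k = 0) := hk0 ▸ Finset.mem_singleton_self k0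
      simpa using this
    refine ⟨k0, hk0mem, fun k hk => ?_⟩
    have hnf : ω.2.1 k ≠ 0 := by
      intro h0
      have : k ∈ univ.filter (fun k : Fin M => ω.2.1 k = 0) := by simp [h0]
      rw [hk0] at this
      exact hk (Finset.mem_singleton.1 this)
    refine ⟨hnf, ?_⟩
    have := hA k
    rw [ARV_eq, if_neg hnf] at this
    exact (sgn_eq_iff hi _).1 this
  · rintro ⟨k0, hk0, hrest⟩
    have hsingle : univ.filter (fun k : Fin M => ω.2.1 k = 0) = {k0} := by
      ext k
      simp only [mem_filter, mem_univ, true_and, Finset.mem_singleton]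
      constructor
      · intro hk
        by_contra hne
        exact (hrest k hne).1 hk
      · rintro rfl; exact hk0
    constructor
    · intro k
      by_cases hk : k = k0
      · subst hk
        rw [ARV_eq, if_pos hk0, gamma_eq, hsgn]
        have : F (k : ℕ) ω = ∅ := by
          ext j
          simp only [F, mem_filter, mem_univ, true_and, Finset.notMem_empty, iff_false, not_and]
          intro hj hj0
          have : j = k := by
            by_contra hne
            exact (hrest j hne).1 hj0
          subst this
          omega
        rw [this]; simp
      · rw [ARV_eq, if_neg (hrest k hk).1]
        unfold betaRV
        rw [(hrest k hk).2]
        exact sgn_c hi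
    · rw [gamma_eq, hsgn, FM_eq, hsingle]
      simp


variable {M : ℕ}

lemma card0 (b c : Bool) :
    (univ.filter (fun ω : Omega M => ω.1 = b ∧ ∀ k, ω.2.1 k ≠ 0 ∧ ω.2.2 k = c)).card
      = 2 ^ M := by
  have : (univ.filter (fun ω : Omega M => ω.1 = b ∧ ∀ k, ω.2.1 k ≠ 0 ∧ ω.2.2 k = c)).card
      = (univ : Finset (Fin M → Bool)).card := by
    apply Finset.card_nbij' (fun ω k => decide (ω.2.1 k = 1))
      (fun g => (b, fun k => if g k then 1 else 2, fun _ => c))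
    · intro a _; exact mem_univ _
    · intro g _
      refine mem_filter.2 ⟨mem_univ _, rfl, fun k => ⟨?_, rfl⟩⟩
      by_cases h : g k <;> simp [h]
    · rintro ⟨e, α, β⟩ ha
      simp only [Finset.mem_coe, mem_filter, mem_univ, true_and] at ha
      obtain ⟨he, hk⟩ := ha
      refine Prod.ext (by simp [he]) (Prod.ext ?_ ?_)
      · funext k
        have h1 := (hk k).1
        revert h1
        have : ∀ x : Fin 3, x ≠ 0 → (if decide (x = 1) = true then (1 : Fin 3) else 2) = x := by
          decide
        exact fun h => this (α k) h
      · funext k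
        exact ((hk k).2).symm
    · intro g _
      funext k
      by_cases h : g k <;> simp [h]
  rw [this]
  simp

lemma card1 (b c : Bool) (k0 : Fin M) :
    (univ.filter (fun ω : Omega M =>
        ω.1 = b ∧ ω.2.1 k0 = 0 ∧ ∀ k, k ≠ k0 → (ω.2.1 k ≠ 0 ∧ ω.2.2 k = c))).card
      = 2 ^ M := by
  have : (univ.filter (fun ω : Omega M =>
        ω.1 = b ∧ ω.2.1 k0 = 0 ∧ ∀ k, k ≠ k0 → (ω.2.1 k ≠ 0 ∧ ω.2.2 k = c))).card
      = (univ : Finset (Fin M → Bool)).card := by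
    apply Finset.card_nbij'
      (fun ω : Omega M => fun k => if k = k0 then ω.2.2 k0 else decide (ω.2.1 k = 1))
      (fun g => (b, fun k => if k = k0 then 0 else if g k then 1 else 2,
        fun k => if k = k0 then g k else c))
    · intro a _; exact mem_univ _
    · intro g _
      refine mem_filter.2 ⟨mem_univ _, rfl, by simp, fun k hk => ⟨?_, by simp [hk]⟩⟩
      simp only [if_neg hk]
      by_cases h : g k <;> simp [h]
    · rintro ⟨e, α, β⟩ ha
      simp only [Finset.mem_coe, mem_filter, mem_univ, true_and] at ha
      obtain ⟨he, h0, hk⟩ := ha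
      refine Prod.ext (by simp [he]) (Prod.ext ?_ ?_)
      · funext k
        by_cases h : k = k0
        · subst h; simp [h0.symm]
        · simp only [if_neg h]
          have h1 := (hk k h).1
          have : ∀ x : Fin 3, x ≠ 0 → (if decide (x = 1) = true then (1 : Fin 3) else 2) = x := by
            decide
          exact this (α k) h1
      · funext k
        by_cases h : k = k0
        · subst h; simp
        · simp [h, ((hk k h).2).symm]
    · intro g _
      funext k
      by_cases h : k = k0
      · subst h; simp
      · simp only [if_neg h]
        by_cases hg : g k <;> simp [h, hg]
  rw [this]
  simp

lemma card2 (b c : Bool) :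
    (univ.filter (fun ω : Omega M =>
        ω.1 = b ∧ ∃ k0, ω.2.1 k0 = 0 ∧ ∀ k, k ≠ k0 → (ω.2.1 k ≠ 0 ∧ ω.2.2 k = c))).card
      = M * 2 ^ M := by
  have hsplit : (univ.filter (fun ω : Omega M =>
        ω.1 = b ∧ ∃ k0, ω.2.1 k0 = 0 ∧ ∀ k, k ≠ k0 → (ω.2.1 k ≠ 0 ∧ ω.2.2 k = c)))
      = (univ : Finset (Fin M)).biUnion (fun k0 => univ.filter (fun ω : Omega M =>
        ω.1 = b ∧ ω.2.1 k0 = 0 ∧ ∀ k, k ≠ k0 → (ω.2.1 k ≠ 0 ∧ ω.2.2 k = c))) := by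
    ext ω
    simp only [mem_filter, mem_univ, true_and, Finset.mem_biUnion]
    tauto
  rw [hsplit, Finset.card_biUnion, Finset.sum_congr rfl (fun k0 _ => card1 b c k0)]
  · simp [mul_comm]
  · intro k0 _ k1 _ hne
    simp only [Finset.disjoint_left, mem_filter, mem_univ, true_and]
    rintro ω ⟨_, h0, _⟩ ⟨_, _, hrest⟩
    exact (hrest k0 (by exact fun h => hne (h ▸ rfl))).1 h0

end S12

namespace S12
variable {M : ℕ} {i : ℤ}

lemma sgn_eq_neg_iff (hi : i = 1 ∨ i = -1) (b : Bool) :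
    sgn b = -i ↔ b = !decide (i = 1) := by
  rcases hi with h | h <;> subst h <;> cases b <;> simp [sgn]

lemma arith1 (M : ℕ) :
    ((2 ^ M : ℕ) : ENNReal) / (2 * 3 ^ M * 2 ^ M) = 1 / (2 * 3 ^ M) := by
  push_cast
  rw [show ((2 : ENNReal) ^ M) / (2 * 3 ^ M * 2 ^ M) = 1 * 2 ^ M / (2 * 3 ^ M * 2 ^ M) by
    rw [one_mul]]
  exact ENNReal.mul_div_mul_right 1 (2 * 3 ^ M) (pow_ne_zero _ (by norm_num))
    (ENNReal.pow_ne_top (by norm_num))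

lemma arith2 (M : ℕ) :
    ((M * 2 ^ M : ℕ) : ENNReal) / (2 * 3 ^ M * 2 ^ M) = (M : ENNReal) / (2 * 3 ^ M) := by
  push_cast
  exact ENNReal.mul_div_mul_right (M : ENNReal) (2 * 3 ^ M) (pow_ne_zero _ (by norm_num))
    (ENNReal.pow_ne_top (by norm_num))

end S12

/-- Single constancy block of length `M`, target value `i ∈ {-1,1}`
(here `gammaRV 0 = γ_1` and `gammaRV M = γ_{M+1}`):
`P(γ_1 = i, A ≡ i, γ_{M+1} = i) = 1/(2·3^M)`,
`P(γ_1 = i, A ≡ i, γ_{M+1} = -i) = M/(2·3^M)`,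
`P(γ_1 = -i, A ≡ i, γ_{M+1} = i) = 0`, hence
`P(γ_1 = -i, A ≡ i) = P(γ_1 = -i, A ≡ i, γ_{M+1} = -i) = 1/(2·3^M)`. -/
theorem stmt12 (M : ℕ) (i : ℤ) (hi : i = 1 ∨ i = -1) :
    unif M {ω | gammaRV 0 ω = i ∧ (∀ k : Fin M, ARV k ω = i) ∧ gammaRV M ω = i} =
        1 / (2 * 3 ^ M) ∧
    unif M {ω | gammaRV 0 ω = i ∧ (∀ k : Fin M, ARV k ω = i) ∧ gammaRV M ω = -i} =
        (M : ENNReal) / (2 * 3 ^ M) ∧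
    unif M {ω | gammaRV 0 ω = -i ∧ (∀ k : Fin M, ARV k ω = i) ∧ gammaRV M ω = i} = 0 ∧
    unif M {ω | gammaRV 0 ω = -i ∧ (∀ k : Fin M, ARV k ω = i)} =
      unif M {ω | gammaRV 0 ω = -i ∧ (∀ k : Fin M, ARV k ω = i) ∧ gammaRV M ω = -i} ∧
    unif M {ω | gammaRV 0 ω = -i ∧ (∀ k : Fin M, ARV k ω = i)} = 1 / (2 * 3 ^ M) := by
  classical
  have hγ0 : ∀ ω : Omega M, gammaRV 0 ω = i ↔ ω.1 = decide (i = 1) := fun ω => by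
    rw [S12.gamma0]; exact S12.sgn_eq_iff hi _
  have hγ0n : ∀ ω : Omega M, gammaRV 0 ω = -i ↔ ω.1 = !decide (i = 1) := fun ω => by
    rw [S12.gamma0]; exact S12.sgn_eq_neg_iff hi _
  have e1 : {ω : Omega M | gammaRV 0 ω = i ∧ (∀ k : Fin M, ARV k ω = i) ∧ gammaRV M ω = i}
      = {ω : Omega M | ω.1 = decide (i = 1) ∧
          ∀ k, ω.2.1 k ≠ 0 ∧ ω.2.2 k = decide (i = 1)} := by
    ext ω
    simp only [Set.mem_setOf_eq]
    constructor
    · rintro ⟨h0, hA, hM⟩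
      have hε := (hγ0 ω).1 h0
      exact ⟨hε, (S12.charPos0 hi ω hε).1 ⟨hA, hM⟩⟩
    · rintro ⟨hε, h⟩
      obtain ⟨hA, hM⟩ := (S12.charPos0 hi ω hε).2 h
      exact ⟨(hγ0 ω).2 hε, hA, hM⟩
  have e2 : {ω : Omega M | gammaRV 0 ω = i ∧ (∀ k : Fin M, ARV k ω = i) ∧ gammaRV M ω = -i}
      = {ω : Omega M | ω.1 = decide (i = 1) ∧
          ∃ k0, ω.2.1 k0 = 0 ∧ ∀ k, k ≠ k0 → (ω.2.1 k ≠ 0 ∧ ω.2.2 k = decide (i = 1))} := by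
    ext ω
    simp only [Set.mem_setOf_eq]
    constructor
    · rintro ⟨h0, hA, hM⟩
      have hε := (hγ0 ω).1 h0
      exact ⟨hε, (S12.charPos1 hi ω hε).1 ⟨hA, hM⟩⟩
    · rintro ⟨hε, h⟩
      obtain ⟨hA, hM⟩ := (S12.charPos1 hi ω hε).2 h
      exact ⟨(hγ0 ω).2 hε, hA, hM⟩
  have e3 : {ω : Omega M | gammaRV 0 ω = -i ∧ (∀ k : Fin M, ARV k ω = i) ∧ gammaRV M ω = i}
      = (∅ : Set (Omega M)) := by
    ext ω
    simp only [Set.mem_setOf_eq, Set.mem_empty_iff_false, iff_false]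
    rintro ⟨h0, hA, hM⟩
    have hε := (hγ0n ω).1 h0
    have h := (S12.charNeg hi ω hε).1 hA
    have := S12.gammaM_of_no_flip ω (fun k => (h k).1)
    rw [hM] at this
    rw [hε, S12.sgn_nc hi] at this
    exact S12.i_ne hi this
  have e4 : {ω : Omega M | gammaRV 0 ω = -i ∧ (∀ k : Fin M, ARV k ω = i)}
      = {ω : Omega M | ω.1 = !decide (i = 1) ∧
          ∀ k, ω.2.1 k ≠ 0 ∧ ω.2.2 k = decide (i = 1)} := by
    ext ω
    simp only [Set.mem_setOf_eq]
    constructor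
    · rintro ⟨h0, hA⟩
      have hε := (hγ0n ω).1 h0
      exact ⟨hε, (S12.charNeg hi ω hε).1 hA⟩
    · rintro ⟨hε, h⟩
      exact ⟨(hγ0n ω).2 hε, (S12.charNeg hi ω hε).2 h⟩
  have e5 : {ω : Omega M | gammaRV 0 ω = -i ∧ (∀ k : Fin M, ARV k ω = i) ∧ gammaRV M ω = -i}
      = {ω : Omega M | ω.1 = !decide (i = 1) ∧
          ∀ k, ω.2.1 k ≠ 0 ∧ ω.2.2 k = decide (i = 1)} := by
    ext ω
    simp only [Set.mem_setOf_eq]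
    constructor
    · rintro ⟨h0, hA, _⟩
      have hε := (hγ0n ω).1 h0
      exact ⟨hε, (S12.charNeg hi ω hε).1 hA⟩
    · rintro ⟨hε, h⟩
      refine ⟨(hγ0n ω).2 hε, (S12.charNeg hi ω hε).2 h, ?_⟩
      rw [S12.gammaM_of_no_flip ω (fun k => (h k).1), hε, S12.sgn_nc hi]
  have m0 : ∀ b : Bool, unif M {ω : Omega M | ω.1 = b ∧
      ∀ k, ω.2.1 k ≠ 0 ∧ ω.2.2 k = decide (i = 1)} = 1 / (2 * 3 ^ M) := by
    intro b
    rw [S12.unif_eq, S12.card0, S12.card_Omega]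
    exact S12.arith1 M
  refine ⟨?_, ?_, ?_, ?_, ?_⟩
  · rw [e1]; exact m0 _
  · rw [e2, S12.unif_eq, S12.card2, S12.card_Omega]
    exact S12.arith2 M
  · rw [e3]; exact measure_empty
  · rw [e4, e5]
  · rw [e4]; exact m0 _

end
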